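/- Let (τ_j)_{j=1}^n and (ω_j)_{j=1}^n be Parseval frames for a finite-dimensional Hilbert space H. Then for every nonzero h ∈ H, (‖θ_τ h‖_0 + ‖θ_ω h‖_0)/2 ≥ 1 / max_{j,k} |⟨τ_j, ω_k⟩|. -/

import Mathlib

/-- Reconstruction: a Parseval frame gives `⟪x, y⟫ = ∑ k, ⟪ω k, y⟫ * ⟪x, ω k⟫`. -/
lemma parseval_reconstruction
    {H : Type*} [NormedAddCommGroup H] [InnerProductSpace ℂ H]
    {n : ℕ} (ω : Fin n → H)
    (hω : ∀ h : H, ‖h‖ ^ 2 = ∑ j, ‖(inner ℂ h (ω j) : ℂ)‖ ^ 2)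
    (x y : H) :
    (inner ℂ x y : ℂ) = ∑ k, (inner ℂ (ω k) y : ℂ) * (inner ℂ x (ω k) : ℂ) := by
  let S : H →ₗ[ℂ] H :=
    { toFun := fun v => ∑ k, (inner ℂ (ω k) v : ℂ) • ω k
      map_add' := by
        intro a b
        simp [inner_add_right, add_smul, Finset.sum_add_distrib]
      map_smul' := by
        intro c a
        simp [inner_smul_right, mul_smul, Finset.smul_sum] }
  have hS : S = LinearMap.id := by
    rw [← ext_inner_map]
    intro v
    have : (inner ℂ (S v) v : ℂ) = ∑ k, ((‖(inner ℂ v (ω k) : ℂ)‖ : ℂ)) ^ 2 := by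
      simp only [S, LinearMap.coe_mk, AddHom.coe_mk, sum_inner, inner_smul_left]
      refine Finset.sum_congr rfl fun k _ => ?_
      rw [RCLike.conj_mul]
      norm_cast
      rw [norm_inner_symm (ω k) v]
      rfl
    rw [this, LinearMap.id_apply, inner_self_eq_norm_sq_to_K]
    norm_cast
    exact congrArg Complex.ofReal (hω v).symm
  have hy : (∑ k, (inner ℂ (ω k) y : ℂ) • ω k) = y := by
    have := congrArg (fun f => f y) hS
    simpa [S] using this
  calc (inner ℂ x y : ℂ) = inner ℂ x (∑ k, (inner ℂ (ω k) y : ℂ) • ω k) := by rw [hy]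
    _ = ∑ k, (inner ℂ (ω k) y : ℂ) * (inner ℂ x (ω k) : ℂ) := by
        rw [inner_sum]; simp [inner_smul_right]

theorem donoho_stark_additive
    {H : Type*} [NormedAddCommGroup H] [InnerProductSpace ℂ H] [FiniteDimensional ℂ H]
    {n : ℕ} (τ ω : Fin n → H)
    (hτ : ∀ h : H, ‖h‖ ^ 2 = ∑ j, ‖(inner ℂ h (τ j) : ℂ)‖ ^ 2)
    (hω : ∀ h : H, ‖h‖ ^ 2 = ∑ j, ‖(inner ℂ h (ω j) : ℂ)‖ ^ 2)
    (h : H) (hh : h ≠ 0) :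
    (((Finset.univ.filter (fun j => (inner ℂ h (τ j) : ℂ) ≠ 0)).card : ℝ) +
      ((Finset.univ.filter (fun k => (inner ℂ h (ω k) : ℂ) ≠ 0)).card : ℝ)) / 2 ≥
      1 / (⨆ j, ⨆ k, ‖(inner ℂ (τ j) (ω k) : ℂ)‖) := by
  classical
  set A := Finset.univ.filter (fun j => (inner ℂ h (τ j) : ℂ) ≠ 0) with hA
  set B := Finset.univ.filter (fun k => (inner ℂ h (ω k) : ℂ) ≠ 0) with hB
  set M := ⨆ j, ⨆ k, ‖(inner ℂ (τ j) (ω k) : ℂ)‖ with hM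
  have hM0 : 0 ≤ M := Real.iSup_nonneg fun j => Real.iSup_nonneg fun k => norm_nonneg _
  have hMb : ∀ j k, ‖(inner ℂ (τ j) (ω k) : ℂ)‖ ≤ M := by
    intro j k
    have h1 : ‖(inner ℂ (τ j) (ω k) : ℂ)‖ ≤ ⨆ k', ‖(inner ℂ (τ j) (ω k') : ℂ)‖ :=
      le_ciSup (f := fun k' => ‖(inner ℂ (τ j) (ω k') : ℂ)‖)
        (Set.Finite.bddAbove (Set.finite_range _)) k
    have h2 : (⨆ k', ‖(inner ℂ (τ j) (ω k') : ℂ)‖) ≤ M :=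
      le_ciSup (f := fun j' => ⨆ k', ‖(inner ℂ (τ j') (ω k') : ℂ)‖)
        (Set.Finite.bddAbove (Set.finite_range _)) j
    exact h1.trans h2
  set a := (A.card : ℝ)
  set b := (B.card : ℝ)
  have ha : 0 ≤ a := Nat.cast_nonneg _
  have hb : 0 ≤ b := Nat.cast_nonneg _
  have hN : (0:ℝ) < ‖h‖ ^ 2 := pow_pos (norm_pos_iff.mpr hh) 2
  -- Cauchy-Schwarz bound for the ω coefficients
  have hsB : (∑ k ∈ B, ‖(inner ℂ h (ω k) : ℂ)‖) ^ 2 ≤ b * ‖h‖ ^ 2 := by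
    have hcs := Finset.sum_mul_sq_le_sq_mul_sq B (fun _ => (1:ℝ))
      (fun k => ‖(inner ℂ h (ω k) : ℂ)‖)
    simp only [one_mul, one_pow] at hcs
    have h1 : (∑ _k ∈ B, (1:ℝ)) = b := by simp [b]
    have h2 : (∑ k ∈ B, ‖(inner ℂ h (ω k) : ℂ)‖ ^ 2) ≤ ‖h‖ ^ 2 := by
      rw [hω h]
      exact Finset.sum_le_sum_of_subset_of_nonneg (Finset.subset_univ B)
        (fun k _ _ => sq_nonneg _)
    calc (∑ k ∈ B, ‖(inner ℂ h (ω k) : ℂ)‖) ^ 2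
        ≤ (∑ _k ∈ B, (1:ℝ)) * ∑ k ∈ B, ‖(inner ℂ h (ω k) : ℂ)‖ ^ 2 := hcs
      _ ≤ b * ‖h‖ ^ 2 := by rw [h1]; exact mul_le_mul_of_nonneg_left h2 hb
  -- bound each τ coefficient
  have hτbound : ∀ j, ‖(inner ℂ h (τ j) : ℂ)‖ ^ 2 ≤ b * ‖h‖ ^ 2 * M ^ 2 := by
    intro j
    have hexp : (inner ℂ h (τ j) : ℂ) = ∑ k, (inner ℂ (ω k) (τ j) : ℂ) * (inner ℂ h (ω k) : ℂ) :=
      parseval_reconstruction ω hω h (τ j)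
    have h1 : ‖(inner ℂ h (τ j) : ℂ)‖ ≤ (∑ k ∈ B, ‖(inner ℂ h (ω k) : ℂ)‖) * M := by
      rw [hexp]
      calc ‖∑ k, (inner ℂ (ω k) (τ j) : ℂ) * (inner ℂ h (ω k) : ℂ)‖
          ≤ ∑ k, ‖(inner ℂ (ω k) (τ j) : ℂ) * (inner ℂ h (ω k) : ℂ)‖ := norm_sum_le _ _
        _ = ∑ k ∈ B, ‖(inner ℂ (ω k) (τ j) : ℂ) * (inner ℂ h (ω k) : ℂ)‖ := by
            refine (Finset.sum_subset (Finset.subset_univ B) ?_).symm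
            intro k _ hk
            have : (inner ℂ h (ω k) : ℂ) = 0 := by
              by_contra hne
              exact hk (Finset.mem_filter.mpr ⟨Finset.mem_univ k, hne⟩)
            simp [this]
        _ ≤ ∑ k ∈ B, ‖(inner ℂ h (ω k) : ℂ)‖ * M := by
            refine Finset.sum_le_sum fun k _ => ?_
            rw [norm_mul, mul_comm]
            refine mul_le_mul_of_nonneg_left ?_ (norm_nonneg _)
            rw [← norm_inner_symm]
            exact hMb j k
        _ = (∑ k ∈ B, ‖(inner ℂ h (ω k) : ℂ)‖) * M := by rw [Finset.sum_mul]
    calc ‖(inner ℂ h (τ j) : ℂ)‖ ^ 2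
        ≤ ((∑ k ∈ B, ‖(inner ℂ h (ω k) : ℂ)‖) * M) ^ 2 := by
          exact pow_le_pow_left₀ (norm_nonneg _) h1 2
      _ = (∑ k ∈ B, ‖(inner ℂ h (ω k) : ℂ)‖) ^ 2 * M ^ 2 := by ring
      _ ≤ b * ‖h‖ ^ 2 * M ^ 2 := mul_le_mul_of_nonneg_right hsB (sq_nonneg M)
  -- main inequality: 1 ≤ a * b * M²
  have hmain : 1 ≤ a * b * M ^ 2 := by
    have h1 : ‖h‖ ^ 2 ≤ a * (b * ‖h‖ ^ 2 * M ^ 2) := by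
      calc ‖h‖ ^ 2 = ∑ j, ‖(inner ℂ h (τ j) : ℂ)‖ ^ 2 := hτ h
        _ = ∑ j ∈ A, ‖(inner ℂ h (τ j) : ℂ)‖ ^ 2 := by
            refine (Finset.sum_subset (Finset.subset_univ A) ?_).symm
            intro j _ hj
            have : (inner ℂ h (τ j) : ℂ) = 0 := by
              by_contra hne
              exact hj (Finset.mem_filter.mpr ⟨Finset.mem_univ j, hne⟩)
            simp [this]
        _ ≤ ∑ _j ∈ A, b * ‖h‖ ^ 2 * M ^ 2 :=
            Finset.sum_le_sum fun j _ => hτbound j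
        _ = a * (b * ‖h‖ ^ 2 * M ^ 2) := by
            rw [Finset.sum_const, nsmul_eq_mul]
    nlinarith [hN, h1]
  have hMne : M ≠ 0 := by
    intro h0
    rw [h0] at hmain
    norm_num at hmain
  have hMpos : 0 < M := hM0.lt_of_ne (Ne.symm hMne)
  rw [ge_iff_le, div_le_div_iff₀ hMpos two_pos]
  nlinarith [hmain, mul_nonneg (sq_nonneg (a - b)) (sq_nonneg M),
    mul_nonneg (mul_nonneg ha hb) (sq_nonneg M),
    mul_nonneg (mul_nonneg (add_nonneg ha hb) hM0) hMpos.le]
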